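/- Suppose N ≠ ∅ and C ∪ L ≠ ∅. Define x* by x*_j = (β_j / ∑_{m∈L∪C} β_m) · R for all j ∈ C, and x*_{ij} = (β_j / ∑_{m∈L∪C} β_m) · R · exp(α_i / (1 + ∑_{k∈L} β_k)) / (∑_{m∈N} exp(α_m / (1 + ∑_{k∈L} β_k))) for all i ∈ N and all j ∈ L. Fix j ∈ C. Then the partial derivative of B at x* with respect to the coordinate x_j exists and equals λ := −(∑_{m∈N} exp(α_m/(1 + ∑_{k∈L} β_k)))^{1 + ∑_{k∈L} β_k} · (∑_{k∈L∪C} β_k)^{1 + ∑_{k∈L∪C} β_k} / (R^{1 + ∑_{k∈L∪C} β_k} · ∏_{k∈L∪C} β_k^{β_k}). -/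

import Mathlib

open Real Finset

/-- The function `B(x) = ∑_{i∈N} exp(α_i) / (∏_{j∈L} x_{ij}^{β_j} · ∏_{j∈C} x_j^{β_j})`. -/
noncomputable def Bfun {N L C : Type*} [Fintype N] [Fintype L] [Fintype C]
    (α : N → ℝ) (β : L ⊕ C → ℝ) (x : (N → L → ℝ) × (C → ℝ)) : ℝ :=
  ∑ i : N, Real.exp (α i) /
    ((∏ j : L, x.1 i j ^ β (Sum.inl j)) * ∏ j : C, x.2 j ^ β (Sum.inr j))

/-- The overall pickpocket probability `P(x) = B(x) / (1 + B(x))`. -/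
noncomputable def Pfun {N L C : Type*} [Fintype N] [Fintype L] [Fintype C]
    (α : N → ℝ) (β : L ⊕ C → ℝ) (x : (N → L → ℝ) × (C → ℝ)) : ℝ :=
  Bfun α β x / (1 + Bfun α β x)

/-- A budget allocation has all entries strictly positive. -/
def PosAlloc {N L C : Type*} (x : (N → L → ℝ) × (C → ℝ)) : Prop :=
  (∀ i j, 0 < x.1 i j) ∧ ∀ j, 0 < x.2 j

/-- A budget allocation is feasible: positive entries, total spend at most `R`. -/
def FeasAlloc {N L C : Type*} [Fintype N] [Fintype L] [Fintype C]
    (R : ℝ) (x : (N → L → ℝ) × (C → ℝ)) : Prop :=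
  PosAlloc x ∧ (∑ i : N, ∑ j : L, x.1 i j) + ∑ j : C, x.2 j ≤ R

/-- The candidate optimal budget allocation `x*`. -/
noncomputable def xstar {N L C : Type*} [Fintype N] [Fintype L] [Fintype C]
    (R : ℝ) (α : N → ℝ) (β : L ⊕ C → ℝ) : (N → L → ℝ) × (C → ℝ) :=
  (fun i j => β (Sum.inl j) / (∑ m : L ⊕ C, β m) * R *
      (Real.exp (α i / (1 + ∑ k : L, β (Sum.inl k))) /
        ∑ m : N, Real.exp (α m / (1 + ∑ k : L, β (Sum.inl k)))),
   fun j => β (Sum.inr j) / (∑ m : L ⊕ C, β m) * R)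

theorem stmt_13 {N L C : Type*} [Fintype N] [Fintype L] [Fintype C] [DecidableEq C]
    [Nonempty N] [Nonempty (L ⊕ C)]
    (R : ℝ) (hR : 0 < R) (α : N → ℝ) (hα : ∀ i, 0 ≤ α i)
    (β : L ⊕ C → ℝ) (hβ : ∀ j, 0 < β j) (j : C)
    (lam : ℝ)
    (hlam : lam = -(((∑ m : N, Real.exp (α m / (1 + ∑ k : L, β (Sum.inl k))))
            ^ (1 + ∑ k : L, β (Sum.inl k)) *
          (∑ k : L ⊕ C, β k) ^ (1 + ∑ k : L ⊕ C, β k)) /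
        (R ^ (1 + ∑ k : L ⊕ C, β k) * ∏ k : L ⊕ C, β k ^ β k))) :
    HasDerivAt
      (fun t : ℝ => Bfun α β ((xstar R α β).1, Function.update (xstar R α β).2 j t))
      lam ((xstar R α β).2 j) := by
  classical
  have hs0 : (0:ℝ) ≤ ∑ k : L, β (Sum.inl k) := Finset.sum_nonneg fun k _ => (hβ _).le
  set s := ∑ k : L, β (Sum.inl k) with hs_def
  have h1s : (0:ℝ) < 1 + s := by linarith
  set S := ∑ k : L ⊕ C, β k with hS_def
  have hS : 0 < S := Finset.sum_pos (fun k _ => hβ k) Finset.univ_nonempty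
  set T := ∑ m : N, Real.exp (α m / (1 + s)) with hT_def
  have hT : 0 < T := Finset.sum_pos (fun m _ => Real.exp_pos _) Finset.univ_nonempty
  set b := β (Sum.inr j) with hb_def
  have hb : 0 < b := hβ _
  set t0 := b / S * R with ht0_def
  have ht0 : 0 < t0 := by positivity
  have hpt : (xstar R α β).2 j = t0 := rfl
  set e : N → ℝ := fun i => Real.exp (α i / (1 + s)) / T with he_def
  have he : ∀ i, 0 < e i := fun i => div_pos (Real.exp_pos _) hT
  have hx1 : ∀ i l, (xstar R α β).1 i l = β (Sum.inl l) / S * R * e i := fun i l => rfl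
  have hx2 : ∀ k, (xstar R α β).2 k = β (Sum.inr k) / S * R := fun k => rfl
  set PL : ℝ := ∏ l : L, (β (Sum.inl l) / S * R) ^ β (Sum.inl l) with hPL_def
  have hPL : 0 < PL := Finset.prod_pos fun l _ => Real.rpow_pos_of_pos (mul_pos (div_pos (hβ _) hS) hR) _
  set Q' : ℝ := ∏ k ∈ Finset.univ.erase j, (β (Sum.inr k) / S * R) ^ β (Sum.inr k)
    with hQ'_def
  have hQ' : 0 < Q' := Finset.prod_pos fun k _ => Real.rpow_pos_of_pos (mul_pos (div_pos (hβ _) hS) hR) _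
  set Pβ : ℝ := ∏ k : L ⊕ C, β k ^ β k with hPβ_def
  have hPβ : 0 < Pβ := Finset.prod_pos fun k _ => Real.rpow_pos_of_pos (hβ k) _
  -- product over L at xstar
  have hPi : ∀ i, (∏ l : L, ((xstar R α β).1 i l) ^ β (Sum.inl l)) = PL * e i ^ s := by
    intro i
    have h1 : ∀ l : L, ((xstar R α β).1 i l) ^ β (Sum.inl l)
        = (β (Sum.inl l) / S * R) ^ β (Sum.inl l) * e i ^ β (Sum.inl l) := by
      intro l
      rw [hx1, Real.mul_rpow (mul_pos (div_pos (hβ _) hS) hR).le (he i).le]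
    simp_rw [h1]
    rw [Finset.prod_mul_distrib, ← Real.rpow_sum_of_pos (he i), ← hs_def, ← hPL_def]
  -- each summand of K
  have hsum : ∀ i, Real.exp (α i) / (PL * e i ^ s * Q')
      = Real.exp (α i / (1 + s)) * T ^ s / (PL * Q') := by
    intro i
    have h1 : e i ^ s = Real.exp (s * (α i / (1 + s))) / T ^ s := by
      rw [he_def]
      simp only []
      rw [Real.div_rpow (Real.exp_pos _).le hT.le, ← Real.exp_mul, mul_comm]
    rw [h1]
    have h2 : Real.exp (α i) = Real.exp (α i / (1 + s)) * Real.exp (s * (α i / (1 + s))) := by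
      rw [← Real.exp_add]
      congr 1
      field_simp
    rw [h2]
    have h3 : Real.exp (s * (α i / (1 + s))) ≠ 0 := (Real.exp_pos _).ne'
    have h4 : (0:ℝ) < T ^ s := Real.rpow_pos_of_pos hT _
    field_simp
  -- the function in t equals K / t ^ b where K = T^(1+s)/(PL*Q')
  have hfun : ∀ t : ℝ, Bfun α β ((xstar R α β).1, Function.update (xstar R α β).2 j t)
      = (T ^ (1 + s) / (PL * Q')) / t ^ b := by
    intro t
    unfold Bfun
    have hQprod : (∏ k : C, (Function.update (xstar R α β).2 j t k) ^ β (Sum.inr k))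
        = t ^ b * Q' := by
      rw [← Finset.mul_prod_erase Finset.univ _ (Finset.mem_univ j)]
      congr 1
      · rw [Function.update_self]
      · refine Finset.prod_congr rfl fun k hk => ?_
        rw [Function.update_of_ne (Finset.ne_of_mem_erase hk), hx2]
    simp only [hQprod, hPi]
    have h5 : ∀ i : N, Real.exp (α i) / (PL * e i ^ s * (t ^ b * Q'))
        = Real.exp (α i) / (PL * e i ^ s * Q') / t ^ b := by
      intro i
      rw [div_div]
      congr 1
      ring
    simp_rw [h5, hsum]
    rw [← Finset.sum_div, ← Finset.sum_div, ← Finset.sum_mul, ← hT_def,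
      Real.rpow_add hT, Real.rpow_one]
  -- derivative of K / t ^ b at t0
  have hd : HasDerivAt (fun t : ℝ => (T ^ (1 + s) / (PL * Q')) / t ^ b)
      ((T ^ (1 + s) / (PL * Q')) * (-b * t0 ^ (-b - 1))) t0 := by
    have h1 : HasDerivAt (fun t : ℝ => t ^ (-b)) (-b * t0 ^ (-b - 1)) t0 :=
      Real.hasDerivAt_rpow_const (Or.inl ht0.ne')
    refine (h1.const_mul _).congr_of_eventuallyEq ?_
    filter_upwards [eventually_gt_nhds ht0] with t ht
    rw [Real.rpow_neg ht.le, div_eq_mul_inv]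
  -- identify the derivative value with lam
  have hPC : PL * Q' * t0 ^ b = Pβ * (R ^ S / S ^ S) := by
    have h1 : ∀ k : L ⊕ C, (β k / S * R) ^ β k = β k ^ β k * (R / S) ^ β k := by
      intro k
      rw [div_mul_eq_mul_div, mul_div_assoc, Real.mul_rpow (hβ k).le (div_pos hR hS).le]
    have h2 : (∏ k : L ⊕ C, (β k / S * R) ^ β k) = Pβ * (R / S) ^ S := by
      simp_rw [h1]
      rw [Finset.prod_mul_distrib, ← Real.rpow_sum_of_pos (div_pos hR hS), ← hS_def, ← hPβ_def]
    have h3 : (∏ k : L ⊕ C, (β k / S * R) ^ β k) = PL * (t0 ^ b * Q') := by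
      rw [Fintype.prod_sum_type, ← Finset.mul_prod_erase Finset.univ
        (fun k : C => (β (Sum.inr k) / S * R) ^ β (Sum.inr k)) (Finset.mem_univ j),
        ← hPL_def, ← hQ'_def, ← hb_def, ← ht0_def]
    rw [show PL * Q' * t0 ^ b = PL * (t0 ^ b * Q') by ring, ← h3, h2,
      Real.div_rpow hR.le hS.le]
  have heq : (T ^ (1 + s) / (PL * Q')) * (-b * t0 ^ (-b - 1)) = lam := by
    rw [hlam]
    have h1 : t0 ^ (-b - 1) = (t0 ^ b * t0)⁻¹ := by
      rw [show -b - 1 = -(b + 1) by ring, Real.rpow_neg ht0.le, Real.rpow_add ht0,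
        Real.rpow_one]
    have hexp1 : S ^ (1 + S) = S * S ^ S := by rw [Real.rpow_add hS, Real.rpow_one]
    have hexp2 : R ^ (1 + S) = R * R ^ S := by rw [Real.rpow_add hR, Real.rpow_one]
    rw [h1, hexp1, hexp2]
    have h4 : (0:ℝ) < R ^ S := Real.rpow_pos_of_pos hR _
    have h5 : (0:ℝ) < S ^ S := Real.rpow_pos_of_pos hS _
    have h6 : (0:ℝ) < t0 ^ b := Real.rpow_pos_of_pos ht0 _
    have hden : PL * Q' * (t0 ^ b * t0) = Pβ * (R ^ S / S ^ S) * (b / S * R) := by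
      rw [← mul_assoc, hPC, ht0_def]
    calc T ^ (1 + s) / (PL * Q') * (-b * (t0 ^ b * t0)⁻¹)
        = -(T ^ (1 + s) * b / (PL * Q' * (t0 ^ b * t0))) := by
          rw [div_eq_mul_inv, div_eq_mul_inv, mul_inv]; ring
      _ = -(T ^ (1 + s) * b / (Pβ * (R ^ S / S ^ S) * (b / S * R))) := by rw [hden]
      _ = -(T ^ (1 + s) * (S * S ^ S) / (R * R ^ S * Pβ)) := by
          rw [neg_inj, div_eq_div_iff (by positivity) (by positivity)]
          field_simp
  rw [hpt, show (fun t : ℝ => Bfun α β ((xstar R α β).1, Function.update (xstar R α β).2 j t))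
    = fun t : ℝ => (T ^ (1 + s) / (PL * Q')) / t ^ b from funext hfun, ← heq]
  exact hd
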